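/- Let b ≥ 3, n = b + 1 and α ∈ [0,1). Let G⋆ be a connected K_{1,b}-minor free graph on n vertices attaining the maximum A_α-spectral radius among all connected K_{1,b}-minor free graphs on n vertices, x its Perron vector, v* a vertex of maximum coordinate, U = N_{G⋆}(v*), U_1 = {v ∈ U : d_U(v) = b − 2}, U_2 = U ∖ U_1 and W = V(G⋆) ∖ (U ∪ {v*}) (so |W| = 1). Then every vertex v ∈ U_2 satisfies d_W(v) = 1 and d_U(v) = b − 3, where d_X(v) denotes the number of neighbors of v in the set X. -/

import Mathlib

open scoped Classical


/-- `H` is a minor of `G` (branch-set / minor-model definition). -/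
def SimpleGraph.IsMinor {W V : Type*} (H : SimpleGraph W) (G : SimpleGraph V) : Prop :=
  ∃ f : W → Set V,
    (∀ w, (f w).Nonempty) ∧
    (∀ w, (G.induce (f w)).Connected) ∧
    (∀ w₁ w₂, w₁ ≠ w₂ → Disjoint (f w₁) (f w₂)) ∧
    (∀ w₁ w₂, H.Adj w₁ w₂ → ∃ v₁ ∈ f w₁, ∃ v₂ ∈ f w₂, G.Adj v₁ v₂)

/-- `G` has no `K_{a,b}`-minor. -/
def kabMinorFree (a b : ℕ) {V : Type*} (G : SimpleGraph V) : Prop :=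
  ¬ (completeBipartiteGraph (Fin a) (Fin b)).IsMinor G

/-- The `A_α`-matrix `α·D(G) + (1-α)·A(G)` of a graph. -/
noncomputable def aMatrix {V : Type*} [Fintype V] (G : SimpleGraph V) (α : ℝ) :
    Matrix V V ℝ :=
  Matrix.of fun u w =>
    (if u = w then α * ∑ z, (if G.Adj w z then (1 : ℝ) else 0) else 0)
    + (if G.Adj u w then (1 - α) else 0)

/-- The `A_α`-spectral radius: the largest eigenvalue of the `A_α`-matrix. -/
noncomputable def lambdaAlpha {V : Type*} [Fintype V] [DecidableEq V]
    (G : SimpleGraph V) (α : ℝ) : ℝ :=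
  sSup (spectrum ℝ (aMatrix G α))


/-- `τ = ⌊(b+1)/(a+1)⌋`, the number of stars of the star forest `F_{a,b}`. -/
def tauOf (a b : ℕ) : ℕ := (b + 1) / (a + 1)

/-- The star forest `F_{a,b}` on `b+1` vertices: the disjoint union of
`τ = ⌊(b+1)/(a+1)⌋` stars, `τ-1` of them isomorphic to `K_{1,a}` and one
isomorphic to `K_{1,c}` with `c = b - (a+1)(τ-1)`.  Vertex `i` belongs to the
block `min (i/(a+1)) (τ-1)`, first `τ-1` blocks of size `a+1`, whose first
vertex is the center of its star. -/
def starForest (a b : ℕ) : SimpleGraph (Fin (b + 1)) where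
  Adj i j := i ≠ j ∧
    min ((i : ℕ) / (a + 1)) (tauOf a b - 1) = min ((j : ℕ) / (a + 1)) (tauOf a b - 1) ∧
    ((i : ℕ) = min ((i : ℕ) / (a + 1)) (tauOf a b - 1) * (a + 1) ∨
     (j : ℕ) = min ((j : ℕ) / (a + 1)) (tauOf a b - 1) * (a + 1))
  symm := by
    constructor
    intro i j h
    exact ⟨h.1.symm, h.2.1.symm, h.2.2.symm⟩
  loopless := by constructor; intro i h; exact h.1 rfl

/-- `S^k(K_b)`: the complete graph `K_b` with one edge (between vertices `0`
and `1`) subdivided `k` times. -/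
def subdividedComplete (b k : ℕ) : SimpleGraph (Fin b ⊕ Fin k) where
  Adj x y :=
    match x, y with
    | Sum.inl i, Sum.inl j =>
        i ≠ j ∧ (k = 0 ∨ ¬(((i : ℕ) = 0 ∧ (j : ℕ) = 1) ∨ ((i : ℕ) = 1 ∧ (j : ℕ) = 0)))
    | Sum.inl i, Sum.inr p => ((i : ℕ) = 0 ∧ (p : ℕ) = 0) ∨ ((i : ℕ) = 1 ∧ (p : ℕ) = k - 1)
    | Sum.inr p, Sum.inl i => ((i : ℕ) = 0 ∧ (p : ℕ) = 0) ∨ ((i : ℕ) = 1 ∧ (p : ℕ) = k - 1)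
    | Sum.inr p, Sum.inr q => (p : ℕ) + 1 = (q : ℕ) ∨ (q : ℕ) + 1 = (p : ℕ)
  symm := by
    constructor
    rintro (i | p) (j | q) h
    · exact ⟨h.1.symm, by tauto⟩
    · exact h
    · exact h
    · tauto
  loopless := by
    constructor
    rintro (i | p) h
    · exact h.1 rfl
    · rcases h with h | h <;> omega

/-- The graph `F(a₁,a₂,a₃)`: a complete graph on `a₁+a₂+a₃ = b-1` vertices with
partition `V₁ ∪ V₂ ∪ V₃` (`|Vᵢ| = aᵢ`), together with a path `v₁v₂v₃` on three
new vertices, every vertex of `Vᵢ` joined to `vᵢ`. -/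
def fGraph (a₁ a₂ a₃ : ℕ) : SimpleGraph (Fin (a₁ + a₂ + a₃) ⊕ Fin 3) where
  Adj x y :=
    match x, y with
    | Sum.inl u, Sum.inl w => u ≠ w
    | Sum.inl u, Sum.inr i =>
        ((i : ℕ) = 0 ∧ (u : ℕ) < a₁) ∨
        ((i : ℕ) = 1 ∧ a₁ ≤ (u : ℕ) ∧ (u : ℕ) < a₁ + a₂) ∨
        ((i : ℕ) = 2 ∧ a₁ + a₂ ≤ (u : ℕ))
    | Sum.inr i, Sum.inl u =>
        ((i : ℕ) = 0 ∧ (u : ℕ) < a₁) ∨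
        ((i : ℕ) = 1 ∧ a₁ ≤ (u : ℕ) ∧ (u : ℕ) < a₁ + a₂) ∨
        ((i : ℕ) = 2 ∧ a₁ + a₂ ≤ (u : ℕ))
    | Sum.inr i, Sum.inr j => (i : ℕ) + 1 = (j : ℕ) ∨ (j : ℕ) + 1 = (i : ℕ)
  symm := by
    constructor
    rintro (u | i) (w | j) h
    · exact h.symm
    · exact h
    · exact h
    · tauto
  loopless := by
    constructor
    rintro (u | i) h
    · exact h rfl
    · rcases h with h | h <;> omega

/-- The Petersen graph: outer `5`-cycle, inner pentagram, five spokes. -/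
def petersen : SimpleGraph (Fin 5 ⊕ Fin 5) where
  Adj x y :=
    match x, y with
    | Sum.inl i, Sum.inl j => (j : ℕ) = ((i : ℕ) + 1) % 5 ∨ (i : ℕ) = ((j : ℕ) + 1) % 5
    | Sum.inl i, Sum.inr j => i = j
    | Sum.inr i, Sum.inl j => i = j
    | Sum.inr i, Sum.inr j => (j : ℕ) = ((i : ℕ) + 2) % 5 ∨ (i : ℕ) = ((j : ℕ) + 2) % 5
  symm := by
    constructor
    rintro (i | i) (j | j) h
    · tauto
    · exact h.symm
    · exact h.symm
    · tauto
  loopless := by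
    constructor
    rintro (i | i) h <;>
      · have hi : (i : ℕ) < 5 := i.isLt
        rcases h with h | h <;> omega

/-- The join `G ∨ H` of two graphs. -/
def joinG {V W : Type*} (G : SimpleGraph V) (H : SimpleGraph W) : SimpleGraph (V ⊕ W) where
  Adj x y :=
    match x, y with
    | Sum.inl u, Sum.inl w => G.Adj u w
    | Sum.inl _, Sum.inr _ => True
    | Sum.inr _, Sum.inl _ => True
    | Sum.inr u, Sum.inr w => H.Adj u w
  symm := by
    constructor
    rintro (u | u) (w | w) h
    · exact h.symm
    · trivial
    · trivial
    · exact h.symm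
  loopless := by
    constructor
    rintro (u | u) h
    · exact G.loopless.irrefl u h
    · exact H.loopless.irrefl u h

/-- The disjoint union of two graphs. -/
def disjUnion {V W : Type*} (G : SimpleGraph V) (H : SimpleGraph W) : SimpleGraph (V ⊕ W) where
  Adj x y :=
    match x, y with
    | Sum.inl u, Sum.inl w => G.Adj u w
    | Sum.inl _, Sum.inr _ => False
    | Sum.inr _, Sum.inl _ => False
    | Sum.inr u, Sum.inr w => H.Adj u w
  symm := by
    constructor
    rintro (u | u) (w | w) h
    · exact h.symm
    · exact h
    · exact h
    · exact h.symm
  loopless := by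
    constructor
    rintro (u | u) h
    · exact G.loopless.irrefl u h
    · exact H.loopless.irrefl u h

/-- `k` disjoint copies of the graph `H`. -/
def copies (k : ℕ) {W : Type*} (H : SimpleGraph W) : SimpleGraph (Fin k × W) where
  Adj x y := x.1 = y.1 ∧ H.Adj x.2 y.2
  symm := by constructor; rintro x y ⟨h1, h2⟩; exact ⟨h1.symm, h2.symm⟩
  loopless := by constructor; rintro x ⟨h1, h2⟩; exact H.loopless.irrefl _ h2

/-- `K_b^e`: the complete graph `K_b` with the edge between vertices `0` and
`1` removed and a pendant vertex attached to each of `0` and `1`. -/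
def kbE (b : ℕ) : SimpleGraph (Fin b ⊕ Fin 2) where
  Adj x y :=
    match x, y with
    | Sum.inl i, Sum.inl j =>
        i ≠ j ∧ ¬(((i : ℕ) = 0 ∧ (j : ℕ) = 1) ∨ ((i : ℕ) = 1 ∧ (j : ℕ) = 0))
    | Sum.inl i, Sum.inr p => (i : ℕ) = (p : ℕ)
    | Sum.inr p, Sum.inl i => (i : ℕ) = (p : ℕ)
    | Sum.inr _, Sum.inr _ => False
  symm := by
    constructor
    rintro (i | p) (j | q) h
    · exact ⟨h.1.symm, by tauto⟩
    · exact h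
    · exact h
    · exact h
  loopless := by
    constructor
    rintro (i | p) h
    · exact h.1 rfl
    · exact h

/-- The number of neighbours of `v` lying in the set `F`. -/
noncomputable def degIn {V : Type*} (G : SimpleGraph V) (F : Set V) (v : V) : ℕ :=
  (G.neighborSet v ∩ F).ncard

/-- `F` is a union of (vertex sets of) connected components of `G - S`. -/
def isComponentUnion {V : Type*} (G : SimpleGraph V) (S : Set V) (F : Set V) : Prop :=
  F ⊆ Sᶜ ∧ ∀ u v : ↥(Sᶜ : Set V), (G.induce Sᶜ).Reachable u v → (u : V) ∈ F → (v : V) ∈ F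

/-- A graph has the `(a,b)`-property if it is `K_{r,s}`-minor free for all
positive `r, s` with `r + s = b + 1` and `r ≤ ω = min {a, ⌊(b+1)/2⌋}`. -/
def abProperty (a b : ℕ) {V : Type*} (G : SimpleGraph V) : Prop :=
  ∀ r s : ℕ, 0 < r → 0 < s → r + s = b + 1 → r ≤ min a ((b + 1) / 2) →
    ¬ (completeBipartiteGraph (Fin r) (Fin s)).IsMinor G

variable {m : ℕ}

/-- Sum of `x` over the neighbours of `u`. -/
noncomputable def sS (G : SimpleGraph (Fin m)) (x : Fin m → ℝ) (u : Fin m) : ℝ :=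
  ∑ w, if G.Adj u w then x w else 0

/-- Real-valued degree. -/
noncomputable def dR (G : SimpleGraph (Fin m)) (u : Fin m) : ℝ :=
  ∑ z, if G.Adj u z then (1 : ℝ) else 0

/-- Natural-number degree. -/
noncomputable def degN (G : SimpleGraph (Fin m)) (u : Fin m) : ℕ :=
  (Finset.univ.filter (fun w => G.Adj u w)).card

lemma dR_eq (G : SimpleGraph (Fin m)) (u : Fin m) : dR G u = (degN G u : ℝ) := by
  rw [dR, degN, Finset.sum_boole]

lemma dR_eq_sS (G : SimpleGraph (Fin m)) (u : Fin m) : dR G u = sS G (fun _ => 1) u := rfl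

lemma sS_pos (G : SimpleGraph (Fin m)) (x : Fin m → ℝ) (hx : ∀ v, 0 < x v) (u z : Fin m)
    (hz : G.Adj u z) : 0 < sS G x u := by
  rw [sS]
  apply Finset.sum_pos'
  · intro i _
    by_cases h : G.Adj u i <;> simp [h, (hx i).le]
  · exact ⟨z, Finset.mem_univ z, by simp [hz, hx z]⟩

open Matrix in
lemma aMatrix_mulVec (G : SimpleGraph (Fin m)) (α : ℝ) (x : Fin m → ℝ) (u : Fin m) :
    (aMatrix G α).mulVec x u = α * dR G u * x u + (1 - α) * sS G x u := by
  rw [Matrix.mulVec, dotProduct]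
  have : ∀ w, (aMatrix G α) u w * x w
      = (if u = w then (α * dR G w) * x w else 0) + (if G.Adj u w then (1-α) * x w else 0) := by
    intro w
    rw [aMatrix, Matrix.of_apply, add_mul, dR]
    congr 1 <;> split <;> ring
  rw [Finset.sum_congr rfl (fun w _ => this w), Finset.sum_add_distrib,
    Finset.sum_ite_eq Finset.univ u (fun w => α * dR G w * x w)]
  simp only [Finset.mem_univ, if_true]
  congr 1
  rw [sS, Finset.mul_sum]
  exact Finset.sum_congr rfl (fun w _ => by split <;> ring)

/-- `G` plus the edge `a b`. -/
def addE (G : SimpleGraph (Fin m)) (a b : Fin m) : SimpleGraph (Fin m) where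
  Adj u v := u ≠ v ∧ (G.Adj u v ∨ (u = a ∧ v = b) ∨ (u = b ∧ v = a))
  symm := by
    constructor
    rintro u v ⟨h1, h2⟩
    refine ⟨h1.symm, ?_⟩
    rcases h2 with h | h | h
    · exact Or.inl h.symm
    · exact Or.inr (Or.inr ⟨h.2, h.1⟩)
    · exact Or.inr (Or.inl ⟨h.2, h.1⟩)
  loopless := by constructor; intro u h; exact h.1 rfl

/-- `G` minus the edge `a b`. -/
def delE (G : SimpleGraph (Fin m)) (a b : Fin m) : SimpleGraph (Fin m) where
  Adj u v := G.Adj u v ∧ ¬((u = a ∧ v = b) ∨ (u = b ∧ v = a))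
  symm := by
    constructor
    rintro u v ⟨h1, h2⟩
    exact ⟨h1.symm, by tauto⟩
  loopless := by constructor; intro u h; exact G.loopless.irrefl u h.1

lemma le_addE (G : SimpleGraph (Fin m)) (a b : Fin m) : G ≤ addE G a b :=
  fun _ _ h => ⟨h.ne, Or.inl h⟩

lemma addE_adj_new (G : SimpleGraph (Fin m)) {a b : Fin m} (hab : a ≠ b) :
    (addE G a b).Adj a b := ⟨hab, Or.inr (Or.inl ⟨rfl, rfl⟩)⟩

lemma delE_adj_of (G : SimpleGraph (Fin m)) {a b u v : Fin m} (h : G.Adj u v)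
    (h1 : ¬(u = a ∧ v = b)) (h2 : ¬(u = b ∧ v = a)) : (delE G a b).Adj u v :=
  ⟨h, by tauto⟩

lemma aux_sum_ite (x : Fin m → ℝ) (u a b : Fin m) :
    (∑ w, if u = a ∧ w = b then x w else 0) = (if u = a then x b else 0) := by
  by_cases hu : u = a
  · subst hu
    simp [Finset.sum_ite_eq' Finset.univ b x]
  · simp [hu]

lemma sS_addE (G : SimpleGraph (Fin m)) {a b : Fin m} (hab : a ≠ b) (hnadj : ¬ G.Adj a b)
    (x : Fin m → ℝ) (u : Fin m) :
    sS (addE G a b) x u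
      = sS G x u + (if u = a then x b else 0) + (if u = b then x a else 0) := by
  have key : ∀ w, (if (addE G a b).Adj u w then x w else 0)
      = (if G.Adj u w then x w else 0)
        + (if u = a ∧ w = b then x w else 0) + (if u = b ∧ w = a then x w else 0) := by
    intro w
    by_cases h1 : G.Adj u w
    · have h2 : ¬(u = a ∧ w = b) := by rintro ⟨rfl, rfl⟩; exact hnadj h1
      have h3 : ¬(u = b ∧ w = a) := by rintro ⟨rfl, rfl⟩; exact hnadj (h1.symm)
      have h4 : (addE G a b).Adj u w := ⟨h1.ne, Or.inl h1⟩
      rw [if_pos h1, if_pos h4, if_neg h2, if_neg h3]; ring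
    · by_cases h2 : u = a ∧ w = b
      · have h3 : ¬(u = b ∧ w = a) := fun h => hab (h2.1.symm.trans h.1)
        have h4 : (addE G a b).Adj u w :=
          ⟨by rw [h2.1, h2.2]; exact hab, Or.inr (Or.inl h2)⟩
        rw [if_pos h4, if_neg h1, if_pos h2, if_neg h3]; ring
      · by_cases h3 : u = b ∧ w = a
        · have h4 : (addE G a b).Adj u w :=
            ⟨by rw [h3.1, h3.2]; exact hab.symm, Or.inr (Or.inr h3)⟩
          rw [if_pos h4, if_neg h1, if_neg h2, if_pos h3]; ring
        · have h4 : ¬(addE G a b).Adj u w := by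
            rintro ⟨h5, h6 | h6 | h6⟩
            exacts [h1 h6, h2 h6, h3 h6]
          rw [if_neg h4, if_neg h1, if_neg h2, if_neg h3]; ring
  rw [sS, Finset.sum_congr rfl (fun w _ => key w), Finset.sum_add_distrib,
    Finset.sum_add_distrib, aux_sum_ite x u a b, aux_sum_ite x u b a]
  rfl

lemma sS_delE (G : SimpleGraph (Fin m)) {a b : Fin m} (hadj : G.Adj a b)
    (x : Fin m → ℝ) (u : Fin m) :
    sS (delE G a b) x u
      = sS G x u - (if u = a then x b else 0) - (if u = b then x a else 0) := by
  have hab : a ≠ b := hadj.ne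
  have key : ∀ w, (if (delE G a b).Adj u w then x w else 0)
      = (if G.Adj u w then x w else 0)
        - (if u = a ∧ w = b then x w else 0) - (if u = b ∧ w = a then x w else 0) := by
    intro w
    by_cases h2 : u = a ∧ w = b
    · have h3 : ¬(u = b ∧ w = a) := fun h => hab (h2.1.symm.trans h.1)
      have h1 : G.Adj u w := by rw [h2.1, h2.2]; exact hadj
      have h4 : ¬(delE G a b).Adj u w := by rintro ⟨_, h5⟩; exact h5 (Or.inl h2)
      rw [if_neg h4, if_pos h1, if_pos h2, if_neg h3]; ring
    · by_cases h3 : u = b ∧ w = a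
      · have h1 : G.Adj u w := by rw [h3.1, h3.2]; exact hadj.symm
        have h4 : ¬(delE G a b).Adj u w := by rintro ⟨_, h5⟩; exact h5 (Or.inr h3)
        rw [if_neg h4, if_pos h1, if_neg h2, if_pos h3]; ring
      · by_cases h1 : G.Adj u w
        · have h4 : (delE G a b).Adj u w := ⟨h1, by tauto⟩
          rw [if_pos h4, if_pos h1, if_neg h2, if_neg h3]; ring
        · have h4 : ¬(delE G a b).Adj u w := by rintro ⟨h5, _⟩; exact h1 h5
          rw [if_neg h4, if_neg h1, if_neg h2, if_neg h3]; ring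
  rw [sS, Finset.sum_congr rfl (fun w _ => key w), Finset.sum_sub_distrib,
    Finset.sum_sub_distrib, aux_sum_ite x u a b, aux_sum_ite x u b a]
  rfl

lemma dR_addE (G : SimpleGraph (Fin m)) {a b : Fin m} (hab : a ≠ b) (hnadj : ¬ G.Adj a b)
    (u : Fin m) :
    dR (addE G a b) u = dR G u + (if u = a then 1 else 0) + (if u = b then 1 else 0) := by
  rw [dR_eq_sS, dR_eq_sS, sS_addE G hab hnadj]

lemma dR_delE (G : SimpleGraph (Fin m)) {a b : Fin m} (hadj : G.Adj a b) (u : Fin m) :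
    dR (delE G a b) u = dR G u - (if u = a then 1 else 0) - (if u = b then 1 else 0) := by
  rw [dR_eq_sS, dR_eq_sS, sS_delE G hadj]

lemma degN_addE_other (G : SimpleGraph (Fin m)) {a b : Fin m} (hab : a ≠ b)
    (hnadj : ¬ G.Adj a b) (u : Fin m) (hua : u ≠ a) (hub : u ≠ b) :
    degN (addE G a b) u = degN G u := by
  have h0 := dR_addE G hab hnadj u
  rw [if_neg hua, if_neg hub, dR_eq, dR_eq] at h0
  have h2 : ((degN (addE G a b) u : ℝ)) = (degN G u : ℝ) := by linarith
  exact_mod_cast h2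

lemma degN_addE_self (G : SimpleGraph (Fin m)) {a b : Fin m} (hab : a ≠ b)
    (hnadj : ¬ G.Adj a b) (u : Fin m) (h : u = a ∨ u = b) :
    degN (addE G a b) u = degN G u + 1 := by
  have hd := dR_addE G hab hnadj u
  have h2 : ((degN (addE G a b) u : ℝ)) = (degN G u : ℝ) + 1 := by
    rcases h with rfl | rfl
    · rw [if_pos rfl, if_neg hab, dR_eq, dR_eq] at hd; linarith
    · rw [if_neg hab.symm, if_pos rfl, dR_eq, dR_eq] at hd; linarith
  exact_mod_cast h2

lemma degN_delE_other (G : SimpleGraph (Fin m)) {a b : Fin m} (hadj : G.Adj a b)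
    (u : Fin m) (hua : u ≠ a) (hub : u ≠ b) :
    degN (delE G a b) u = degN G u := by
  have h0 := dR_delE G hadj u
  rw [if_neg hua, if_neg hub, dR_eq, dR_eq] at h0
  have h2 : ((degN (delE G a b) u : ℝ)) = (degN G u : ℝ) := by linarith
  exact_mod_cast h2

lemma degN_delE_self (G : SimpleGraph (Fin m)) {a b : Fin m} (hadj : G.Adj a b)
    (u : Fin m) (h : u = a ∨ u = b) :
    degN (delE G a b) u + 1 = degN G u := by
  have hab : a ≠ b := hadj.ne
  have hd := dR_delE G hadj u
  have h2 : ((degN (delE G a b) u : ℝ)) + 1 = (degN G u : ℝ) := by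
    rcases h with rfl | rfl
    · rw [if_pos rfl, if_neg hab, dR_eq, dR_eq] at hd; linarith
    · rw [if_neg hab.symm, if_pos rfl, dR_eq, dR_eq] at hd; linarith
  exact_mod_cast h2

open Matrix in
lemma mulVec_addE (G : SimpleGraph (Fin m)) {a b : Fin m} (hab : a ≠ b) (hnadj : ¬ G.Adj a b)
    (α : ℝ) (x : Fin m → ℝ) (u : Fin m) :
    (aMatrix (addE G a b) α).mulVec x u = (aMatrix G α).mulVec x u
      + (if u = a then α * x a + (1 - α) * x b else 0)
      + (if u = b then α * x b + (1 - α) * x a else 0) := by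
  rw [aMatrix_mulVec, aMatrix_mulVec, dR_addE G hab hnadj, sS_addE G hab hnadj]
  by_cases h1 : u = a
  · subst h1
    simp only [if_pos rfl, hab, if_false, if_neg hab, eq_self_iff_true, if_true]
    ring
  · by_cases h2 : u = b
    · subst h2
      simp only [if_pos rfl, h1, if_false, if_neg h1, eq_self_iff_true, if_true]
      ring
    · simp only [h1, h2, if_false, if_neg h1, if_neg h2]
      ring

open Matrix in
lemma mulVec_delE (G : SimpleGraph (Fin m)) {a b : Fin m} (hadj : G.Adj a b)
    (α : ℝ) (x : Fin m → ℝ) (u : Fin m) :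
    (aMatrix (delE G a b) α).mulVec x u = (aMatrix G α).mulVec x u
      - (if u = a then α * x a + (1 - α) * x b else 0)
      - (if u = b then α * x b + (1 - α) * x a else 0) := by
  have hab : a ≠ b := hadj.ne
  rw [aMatrix_mulVec, aMatrix_mulVec, dR_delE G hadj, sS_delE G hadj]
  by_cases h1 : u = a
  · subst h1
    simp only [if_pos rfl, hab, if_false, if_neg hab, eq_self_iff_true, if_true]
    ring
  · by_cases h2 : u = b
    · subst h2
      simp only [if_pos rfl, h1, if_false, if_neg h1, eq_self_iff_true, if_true]
      ring
    · simp only [h1, h2, if_false, if_neg h1, if_neg h2]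
      ring

open Matrix in
lemma Q_addE (G : SimpleGraph (Fin m)) {a b : Fin m} (hab : a ≠ b) (hnadj : ¬ G.Adj a b)
    (α : ℝ) (x : Fin m → ℝ) :
    x ⬝ᵥ ((aMatrix (addE G a b) α).mulVec x) = x ⬝ᵥ ((aMatrix G α).mulVec x)
      + (x a * (α * x a + (1 - α) * x b) + x b * (α * x b + (1 - α) * x a)) := by
  rw [dotProduct, dotProduct,
    Finset.sum_congr rfl (fun u _ => by rw [mulVec_addE G hab hnadj α x u])]
  simp only [mul_add, Finset.sum_add_distrib, mul_ite, mul_zero]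
  rw [Finset.sum_ite_eq' Finset.univ a (fun u => x u * (α * x a) + x u * ((1 - α) * x b)),
    Finset.sum_ite_eq' Finset.univ b (fun u => x u * (α * x b) + x u * ((1 - α) * x a))]
  simp only [Finset.mem_univ, if_true]
  ring

open Matrix in
lemma Q_delE (G : SimpleGraph (Fin m)) {a b : Fin m} (hadj : G.Adj a b)
    (α : ℝ) (x : Fin m → ℝ) :
    x ⬝ᵥ ((aMatrix (delE G a b) α).mulVec x) = x ⬝ᵥ ((aMatrix G α).mulVec x)
      - (x a * (α * x a + (1 - α) * x b) + x b * (α * x b + (1 - α) * x a)) := by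
  rw [dotProduct, dotProduct,
    Finset.sum_congr rfl (fun u _ => by rw [mulVec_delE G hadj α x u])]
  simp only [mul_sub, Finset.sum_sub_distrib, mul_ite, mul_zero]
  rw [Finset.sum_ite_eq' Finset.univ a (fun u => x u * (α * x a + (1 - α) * x b)),
    Finset.sum_ite_eq' Finset.univ b (fun u => x u * (α * x b + (1 - α) * x a))]
  simp only [Finset.mem_univ, if_true]
  ring

lemma induce_singleton_connected {V : Type*} (G : SimpleGraph V) (v : V) :
    (G.induce ({v} : Set V)).Connected := by
  have hnon : Nonempty ↥({v} : Set V) := ⟨⟨v, rfl⟩⟩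
  refine ⟨fun a b => ?_⟩
  have : a = b := by
    apply Subtype.ext
    have ha := a.2
    have hb := b.2
    rw [Set.mem_singleton_iff] at ha hb
    rw [ha, hb]
  rw [this]

/-- On `b+1` vertices, a `K_{1,b}` minor forces a vertex of degree `≥ b`. -/
lemma deg_ge_of_minor {b : ℕ} {G : SimpleGraph (Fin (b + 1))}
    (h : (completeBipartiteGraph (Fin 1) (Fin b)).IsMinor G) : ∃ v, b ≤ degN G v := by
  obtain ⟨f, hne, hcon, hdisj, hadj⟩ := h
  set g : Fin 1 ⊕ Fin b → Fin (b + 1) := fun w => (hne w).some with hg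
  have hmem : ∀ w, g w ∈ f w := fun w => (hne w).some_mem
  have hginj : Function.Injective g := by
    intro w1 w2 hw
    by_contra hne'
    exact Set.disjoint_left.mp (hdisj w1 w2 hne') (hmem w1) (hw ▸ hmem w2)
  have hgbij : Function.Bijective g := by
    rw [Fintype.bijective_iff_injective_and_card]
    refine ⟨hginj, by simp; omega⟩
  have hsingle : ∀ w p, p ∈ f w → p = g w := by
    intro w p hp
    obtain ⟨w', rfl⟩ := hgbij.2 p
    by_contra hne'
    have hww : w' ≠ w := fun h => hne' (by rw [h])
    exact Set.disjoint_left.mp (hdisj w' w hww) (hmem w') hp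
  refine ⟨g (Sum.inl 0), ?_⟩
  have hadj' : ∀ i : Fin b, G.Adj (g (Sum.inl 0)) (g (Sum.inr i)) := by
    intro i
    have hKB : (completeBipartiteGraph (Fin 1) (Fin b)).Adj (Sum.inl 0) (Sum.inr i) := by
      simp
    obtain ⟨v₁, hv₁, v₂, hv₂, hadj₂⟩ := hadj _ _ hKB
    rwa [hsingle _ _ hv₁, hsingle _ _ hv₂] at hadj₂
  rw [degN]
  calc b = (Finset.univ : Finset (Fin b)).card := by simp
  _ ≤ _ := by
        apply Finset.card_le_card_of_injOn (fun i => g (Sum.inr i))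
        · intro i _
          simp only [Finset.mem_filter, Finset.mem_univ, true_and]
          simpa using hadj' i
        · intro i _ j _ hij
          have := hginj hij
          simpa using this

/-- A vertex of degree `≥ b` gives a `K_{1,b}` minor. -/
lemma minor_of_deg {b : ℕ} {G : SimpleGraph (Fin (b + 1))} {v : Fin (b + 1)}
    (h : b ≤ degN G v) : (completeBipartiteGraph (Fin 1) (Fin b)).IsMinor G := by
  rw [degN] at h
  obtain ⟨s, hsub, hcard⟩ := Finset.exists_subset_card_eq h
  have e : Fin b ≃ ↥s := (Finset.equivFinOfCardEq hcard).symm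
  have hadj : ∀ i : Fin b, G.Adj v ((e i : Fin (b + 1))) := by
    intro i
    have := hsub (e i).2
    rw [Finset.mem_filter] at this
    exact this.2
  refine ⟨Sum.elim (fun _ => {v}) (fun i => {(e i : Fin (b + 1))}), ?_, ?_, ?_, ?_⟩
  · rintro (w | w) <;> exact ⟨_, rfl⟩
  · rintro (w | w) <;> apply induce_singleton_connected
  · rintro (w1 | w1) (w2 | w2) hne
    · exact absurd (by omega : w1 = w2) (fun h => hne (by rw [h]))
    · simp only [Sum.elim_inl, Sum.elim_inr, Set.disjoint_singleton]
      intro h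
      exact (G.ne_of_adj (hadj w2)) (by first | exact h | exact h.symm)
    · simp only [Sum.elim_inl, Sum.elim_inr, Set.disjoint_singleton]
      intro h
      exact (G.ne_of_adj (hadj w1)) (by first | exact h | exact h.symm)
    · simp only [Sum.elim_inr, Set.disjoint_singleton]
      intro h
      apply hne
      have := Subtype.ext h
      rw [e.apply_eq_iff_eq] at this
      rw [this]
  · rintro (w1 | w1) (w2 | w2) hKB
    · simp [completeBipartiteGraph] at hKB
    · exact ⟨v, rfl, (e w2 : Fin (b + 1)), rfl, hadj w2⟩
    · exact ⟨(e w1 : Fin (b + 1)), rfl, v, rfl, (hadj w1).symm⟩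
    · simp [completeBipartiteGraph] at hKB

lemma connected_of_hub {G : SimpleGraph (Fin m)} (hub : Fin m)
    (h : ∀ p, p ≠ hub → G.Adj p hub ∨ ∃ q, G.Adj p q ∧ G.Adj q hub) :
    G.Connected := by
  have hreach : ∀ p, G.Reachable p hub := by
    intro p
    by_cases hp : p = hub
    · rw [hp]
    · rcases h p hp with h1 | ⟨q, h1, h2⟩
      · exact h1.reachable
      · exact h1.reachable.trans h2.reachable
  have hnon : Nonempty (Fin m) := ⟨hub⟩
  exact ⟨fun a c => (hreach a).trans (hreach c).symm⟩

lemma exists_adj_of_connected {G : SimpleGraph (Fin m)} (hconn : G.Connected)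
    (u w : Fin m) (hne : u ≠ w) : ∃ z, G.Adj u z := by
  obtain ⟨p⟩ := hconn.preconnected u w
  cases p with
  | nil => exact absurd rfl hne
  | cons h _ => exact ⟨_, h⟩

/-- If not everything outside `v` is adjacent to `v`, i.e. degree small, there's a non-neighbour. -/
lemma exists_nonneighbor {b : ℕ} {G : SimpleGraph (Fin (b + 1))} {v : Fin (b + 1)}
    (h : degN G v < b) : ∃ u, u ≠ v ∧ ¬ G.Adj v u := by
  by_contra hc
  push_neg at hc
  have hsub : Finset.univ.erase v ⊆ Finset.univ.filter (fun w => G.Adj v w) := by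
    intro u hu
    rw [Finset.mem_erase] at hu
    rw [Finset.mem_filter]
    exact ⟨Finset.mem_univ u, hc u hu.1⟩
  have := Finset.card_le_card hsub
  rw [Finset.card_erase_of_mem (Finset.mem_univ v)] at this
  simp only [Finset.card_univ, Fintype.card_fin] at this
  rw [degN] at h
  omega

/-- A vertex of degree `b-1` on `b+1` vertices with a known non-neighbour `v`
is adjacent to everything else. -/
lemma full_vertex {b : ℕ} {G : SimpleGraph (Fin (b + 1))} {u v : Fin (b + 1)}
    (hb : 1 ≤ b) (hdeg : degN G u = b - 1) (huv : u ≠ v) (hnadj : ¬ G.Adj u v) :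
    ∀ z, z ≠ u → z ≠ v → G.Adj u z := by
  have hsub : Finset.univ.filter (fun w => G.Adj u w) ⊆ (Finset.univ.erase u).erase v := by
    intro z hz
    rw [Finset.mem_filter] at hz
    rw [Finset.mem_erase, Finset.mem_erase]
    exact ⟨fun h => hnadj (h ▸ hz.2), G.ne_of_adj hz.2.symm, Finset.mem_univ z⟩
  have hcard : ((Finset.univ.erase u).erase v).card = b - 1 := by
    rw [Finset.card_erase_of_mem, Finset.card_erase_of_mem (Finset.mem_univ u)]
    · simp only [Finset.card_univ, Fintype.card_fin]
      omega
    · rw [Finset.mem_erase]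
      exact ⟨(Ne.symm huv), Finset.mem_univ v⟩
  have heq : Finset.univ.filter (fun w => G.Adj u w) = (Finset.univ.erase u).erase v := by
    apply Finset.eq_of_subset_of_card_le hsub
    rw [hcard, ← degN, hdeg]
  intro z hzu hzv
  have : z ∈ (Finset.univ.erase u).erase v := by
    rw [Finset.mem_erase, Finset.mem_erase]
    exact ⟨hzv, hzu, Finset.mem_univ z⟩
  rw [← heq, Finset.mem_filter] at this
  exact this.2

/-- Neighbour sum of a vertex adjacent to everything except itself and `v`. -/
lemma sS_full {b : ℕ} {G : SimpleGraph (Fin (b + 1))} {u v : Fin (b + 1)}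
    (huv : u ≠ v) (hnadj : ¬ G.Adj u v) (hfull : ∀ z, z ≠ u → z ≠ v → G.Adj u z)
    (x : Fin (b + 1) → ℝ) :
    sS G x u = (∑ z, x z) - x u - x v := by
  have key : ∀ w, (if G.Adj u w then x w else 0)
      = x w - (if w = u then x w else 0) - (if w = v then x w else 0) := by
    intro w
    by_cases h1 : w = u
    · subst h1
      rw [if_neg (G.loopless.irrefl w), if_pos rfl, if_neg (fun h : w = v => huv h)]
      ring
    · by_cases h2 : w = v
      · subst h2
        rw [if_neg (fun h => hnadj h), if_neg h1, if_pos rfl]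
        ring
      · rw [if_pos (hfull w h1 h2), if_neg h1, if_neg h2]
        ring
  rw [sS, Finset.sum_congr rfl (fun w _ => key w), Finset.sum_sub_distrib,
    Finset.sum_sub_distrib]
  congr 2
  · exact Finset.sum_ite_eq' Finset.univ u x |>.trans (by simp)
  · exact Finset.sum_ite_eq' Finset.univ v x |>.trans (by simp)

open Pointwise in
lemma aMatrix_isHermitian {V : Type*} [Fintype V] (G : SimpleGraph V) (α : ℝ) :
    (aMatrix G α).IsHermitian := by
  ext u w
  simp only [aMatrix, Matrix.conjTranspose_apply, Matrix.of_apply, star_trivial]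
  by_cases h : u = w
  · subst h; rfl
  · simp [h, Ne.symm h, G.adj_comm u w]

open Matrix Pointwise in
lemma engine {m : ℕ} (α : ℝ) (G G' : SimpleGraph (Fin m))
    (x : Fin m → ℝ)
    (heig : (aMatrix G α).mulVec x = lambdaAlpha G α • x)
    (hle : lambdaAlpha G' α ≤ lambdaAlpha G α)
    (hxx : 0 < x ⬝ᵥ x)
    (hQ : x ⬝ᵥ (aMatrix G α).mulVec x ≤ x ⬝ᵥ (aMatrix G' α).mulVec x)
    (p : Fin m) (hrow : (aMatrix G α).mulVec x p < (aMatrix G' α).mulVec x p) : False := by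
  set lam := lambdaAlpha G α with hlam
  set lam' := lambdaAlpha G' α with hlam'
  set A' := aMatrix G' α with hA'def
  have hh : A'.IsHermitian := aMatrix_isHermitian G' α
  -- M := lam' • 1 - A' is PSD
  set M : Matrix (Fin m) (Fin m) ℝ := lam' • (1 : Matrix (Fin m) (Fin m) ℝ) - A' with hM
  have hMalg : M = algebraMap ℝ (Matrix (Fin m) (Fin m) ℝ) lam' - A' := by
    rw [Algebra.algebraMap_eq_smul_one]
  have hMH : M.IsHermitian := by
    have h1 : (lam' • (1 : Matrix (Fin m) (Fin m) ℝ)).IsHermitian := by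
      simp [Matrix.IsHermitian]
    exact h1.sub hh
  have hMpsd : M.PosSemidef := by
    refine hMH.posSemidef_iff_eigenvalues_nonneg.mpr fun i => show 0 ≤ hMH.eigenvalues i from ?_
    have hmem : hMH.eigenvalues i ∈ spectrum ℝ M := hMH.eigenvalues_mem_spectrum_real i
    have hspec : spectrum ℝ M = ({lam'} : Set ℝ) - spectrum ℝ A' := by
      rw [hMalg, spectrum.singleton_sub_eq]
    rw [hspec] at hmem
    obtain ⟨r, hr, s, hs, hrs⟩ := Set.mem_sub.mp hmem
    rw [Set.mem_singleton_iff] at hr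
    have hsle : s ≤ lam' := le_csSup ((Matrix.finite_spectrum A').bddAbove) hs
    subst hr
    linarith [hrs ▸ sub_nonneg.mpr hsle]
  -- Rayleigh bound
  have hstar : star x = x := by
    funext i; exact star_trivial _
  have hMx : M *ᵥ x = lam' • x - A' *ᵥ x := by
    rw [hM, Matrix.sub_mulVec, Matrix.smul_mulVec, Matrix.one_mulVec]
  have hray0 : 0 ≤ x ⬝ᵥ (M *ᵥ x) := by
    have := hMpsd.dotProduct_mulVec_nonneg x
    rw [hstar] at this
    simpa using this
  have hray : x ⬝ᵥ (A' *ᵥ x) ≤ lam' * (x ⬝ᵥ x) := by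
    rw [hMx, dotProduct_sub, dotProduct_smul, smul_eq_mul] at hray0
    linarith
  have hQG : x ⬝ᵥ ((aMatrix G α) *ᵥ x) = lam * (x ⬝ᵥ x) := by
    rw [heig, dotProduct_smul, smul_eq_mul]
  have hlamle : lam * (x ⬝ᵥ x) ≤ lam' * (x ⬝ᵥ x) := by
    calc lam * (x ⬝ᵥ x) = x ⬝ᵥ ((aMatrix G α) *ᵥ x) := hQG.symm
    _ ≤ x ⬝ᵥ (A' *ᵥ x) := hQ
    _ ≤ lam' * (x ⬝ᵥ x) := hray
  have hlameq : lam' = lam := le_antisymm hle (le_of_mul_le_mul_right hlamle hxx)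
  have hQeq : x ⬝ᵥ (A' *ᵥ x) = lam' * (x ⬝ᵥ x) := by
    refine le_antisymm hray ?_
    rw [hlameq]; rw [← hQG]; exact hQ
  have hM0 : x ⬝ᵥ (M *ᵥ x) = 0 := by
    rw [hMx, dotProduct_sub, dotProduct_smul, smul_eq_mul, hQeq, sub_self]
  have hMv0 : M *ᵥ x = 0 := by
    rw [← hMpsd.dotProduct_mulVec_zero_iff x, hstar]
    exact hM0
  have hA'x : A' *ᵥ x = lam' • x := by
    have := hMx.symm.trans hMv0
    linear_combination (norm := module) -this
  have h1 : (A' *ᵥ x) p = lam * x p := by rw [hA'x, hlameq]; rfl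
  have h2 : ((aMatrix G α) *ᵥ x) p = lam * x p := by rw [heig]; rfl
  rw [h1, ← h2] at hrow
  exact lt_irrefl _ hrow

open Matrix in
lemma free_of_degle {b : ℕ} (hb : 1 ≤ b) (H : SimpleGraph (Fin (b + 1)))
    (h : ∀ p, degN H p ≤ b - 1) : kabMinorFree 1 b H := by
  intro hmin
  obtain ⟨p, hp⟩ := deg_ge_of_minor hmin
  have := h p
  omega

open Matrix in
lemma add_improves {b : ℕ} (hb : 3 ≤ b) {α : ℝ} (hα0 : 0 ≤ α) (hα1 : α < 1)
    {G : SimpleGraph (Fin (b + 1))}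
    (hmax : ∀ H : SimpleGraph (Fin (b + 1)), H.Connected → kabMinorFree 1 b H →
      lambdaAlpha H α ≤ lambdaAlpha G α)
    (hconn : G.Connected)
    {x : Fin (b + 1) → ℝ} (hx : ∀ v, 0 < x v)
    (heig : (aMatrix G α).mulVec x = lambdaAlpha G α • x)
    (hdegle : ∀ p, degN G p ≤ b - 1)
    {a c : Fin (b + 1)} (hac : a ≠ c) (hnadj : ¬ G.Adj a c)
    (hda : degN G a ≤ b - 2) (hdc : degN G c ≤ b - 2) : False := by
  have hconn' : (addE G a c).Connected := hconn.mono (le_addE G a c)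
  have hfree' : kabMinorFree 1 b (addE G a c) := by
    apply free_of_degle (by omega)
    intro p
    by_cases h1 : p = a
    · subst h1
      rw [degN_addE_self G hac hnadj p (Or.inl rfl)]; omega
    · by_cases h2 : p = c
      · subst h2
        rw [degN_addE_self G hac hnadj p (Or.inr rfl)]; omega
      · rw [degN_addE_other G hac hnadj p h1 h2]; exact hdegle p
  have hxx : 0 < x ⬝ᵥ x := by
    rw [dotProduct]
    apply Finset.sum_pos
    · intro i _; exact mul_pos (hx i) (hx i)
    · exact ⟨0, Finset.mem_univ 0⟩
  apply engine α G _ x heig (hmax _ hconn' hfree') hxx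
  · rw [Q_addE G hac hnadj α x]
    have h1 : 0 ≤ α * x a * x a + α * x c * x c := by
      have := mul_nonneg hα0 (mul_self_nonneg (x a))
      have := mul_nonneg hα0 (mul_self_nonneg (x c))
      nlinarith
    have h2 : 0 < (1 - α) * (x a * x c) := by
      have := mul_pos (hx a) (hx c)
      nlinarith
    nlinarith
  · show (aMatrix G α).mulVec x a < (aMatrix (addE G a c) α).mulVec x a
    rw [mulVec_addE G hac hnadj α x a, if_pos rfl, if_neg hac]
    have h1 : 0 ≤ α * x a := mul_nonneg hα0 (hx a).le
    have h2 : 0 < (1 - α) * x c := mul_pos (by linarith) (hx c)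
    linarith

open Matrix in
lemma rot_improves {b : ℕ} (hb : 3 ≤ b) {α : ℝ} (hα0 : 0 ≤ α) (hα1 : α < 1)
    {G : SimpleGraph (Fin (b + 1))}
    (hmax : ∀ H : SimpleGraph (Fin (b + 1)), H.Connected → kabMinorFree 1 b H →
      lambdaAlpha H α ≤ lambdaAlpha G α)
    {x : Fin (b + 1) → ℝ} (hx : ∀ v, 0 < x v)
    (heig : (aMatrix G α).mulVec x = lambdaAlpha G α • x)
    (hdegle : ∀ p, degN G p ≤ b - 1)
    {u zdel znew : Fin (b + 1)}
    (hadj : G.Adj u zdel) (hnadj : ¬ G.Adj u znew) (hune : u ≠ znew) (hzne : zdel ≠ znew)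
    (hconn' : (addE (delE G u zdel) u znew).Connected)
    (hxle : x zdel ≤ x znew) (hdznew : degN G znew ≤ b - 2) : False := by
  have huzd : u ≠ zdel := hadj.ne
  have hnadj1 : ¬ (delE G u zdel).Adj u znew := fun h => hnadj h.1
  have hfree' : kabMinorFree 1 b (addE (delE G u zdel) u znew) := by
    apply free_of_degle (by omega)
    intro p
    by_cases h1 : p = u
    · rw [h1, degN_addE_self (delE G u zdel) hune hnadj1 u (Or.inl rfl)]
      have h2 := degN_delE_self G hadj u (Or.inl rfl)
      have := hdegle u
      omega
    · by_cases h2 : p = znew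
      · rw [h2, degN_addE_self (delE G u zdel) hune hnadj1 znew (Or.inr rfl)]
        rw [degN_delE_other G hadj znew (Ne.symm hune) (Ne.symm hzne)]
        omega
      · rw [degN_addE_other (delE G u zdel) hune hnadj1 p h1 h2]
        by_cases h3 : p = zdel
        · rw [h3]
          have h4 := degN_delE_self G hadj zdel (Or.inr rfl)
          have := hdegle zdel
          omega
        · rw [degN_delE_other G hadj p h1 h3]
          exact hdegle p
  have hxx : 0 < x ⬝ᵥ x := by
    rw [dotProduct]
    apply Finset.sum_pos
    · intro i _; exact mul_pos (hx i) (hx i)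
    · exact ⟨0, Finset.mem_univ 0⟩
  apply engine α G _ x heig (hmax _ hconn' hfree') hxx
  · rw [Q_addE (delE G u zdel) hune hnadj1 α x, Q_delE G hadj α x]
    have h1 : 0 ≤ α * ((x znew)^2 - (x zdel)^2) := by
      apply mul_nonneg hα0
      nlinarith [(hx zdel).le, (hx znew).le]
    have h2 : 0 ≤ 2 * ((1 - α) * (x u * (x znew - x zdel))) := by
      apply mul_nonneg (by norm_num)
      apply mul_nonneg (by linarith)
      apply mul_nonneg (hx u).le
      linarith
    nlinarith
  · show (aMatrix G α).mulVec x znew < (aMatrix (addE (delE G u zdel) u znew) α).mulVec x znew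
    rw [mulVec_addE (delE G u zdel) hune hnadj1 α x znew, if_pos rfl, if_neg (Ne.symm hune),
      mulVec_delE G hadj α x znew, if_neg (Ne.symm hune), if_neg (Ne.symm hzne)]
    have h1 : 0 ≤ α * x znew := mul_nonneg hα0 (hx znew).le
    have h2 : 0 < (1 - α) * x u := mul_pos (by linarith) (hx u)
    linarith


/-- For `n = b + 1`: in an `A_α`-extremal connected `K_{1,b}`-minor free
graph, every vertex of `U₂` has exactly one neighbour in `W` and exactly
`b - 3` neighbours in `U`. -/
theorem extremal_K1b_U2_degrees_n_eq_b_add_one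
    (n b : ℕ) (hb : 3 ≤ b) (hnb : n = b + 1)
    (α : ℝ) (hα0 : 0 ≤ α) (hα1 : α < 1)
    (G : SimpleGraph (Fin n)) (hconn : G.Connected) (hfree : kabMinorFree 1 b G)
    (hmax : ∀ H : SimpleGraph (Fin n), H.Connected → kabMinorFree 1 b H →
      lambdaAlpha H α ≤ lambdaAlpha G α)
    (x : Fin n → ℝ) (hx : ∀ v, 0 < x v)
    (heig : (aMatrix G α).mulVec x = lambdaAlpha G α • x)
    (vstar : Fin n) (hvstar : ∀ u, x u ≤ x vstar) :
    ∀ v ∈ G.neighborSet vstar, degIn G (G.neighborSet vstar) v ≠ b - 2 →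
      degIn G ((G.neighborSet vstar ∪ {vstar})ᶜ) v = 1 ∧
      degIn G (G.neighborSet vstar) v = b - 3 := by
  subst hnb
  have hb1 : 1 ≤ b := by omega
  have hdegle : ∀ p, degN G p ≤ b - 1 := by
    intro p
    by_contra hcon
    push_neg at hcon
    exact hfree (minor_of_deg (show b ≤ degN G p by omega))
  have hev : ∀ u, α * dR G u * x u + (1 - α) * sS G x u = lambdaAlpha G α * x u := by
    intro u
    have h := congrFun heig u
    rw [aMatrix_mulVec] at h
    simpa using h
  -- Step A : the max-coordinate vertex has degree b - 1
  have hdegv : degN G vstar = b - 1 := by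
    by_contra hAne
    have hAlt : degN G vstar ≤ b - 2 := by have := hdegle vstar; omega
    obtain ⟨u₀, hu₀ne, hu₀nadj⟩ := exists_nonneighbor (show degN G vstar < b by omega)
    by_cases hdu : degN G u₀ ≤ b - 2
    · exact add_improves hb hα0 hα1 hmax hconn hx heig hdegle (Ne.symm hu₀ne) hu₀nadj hAlt hdu
    · have hdu' : degN G u₀ = b - 1 := by have := hdegle u₀; omega
      have hu₀nadj' : ¬ G.Adj u₀ vstar := fun h => hu₀nadj h.symm
      have hfull : ∀ z, z ≠ u₀ → z ≠ vstar → G.Adj u₀ z :=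
        full_vertex hb1 hdu' hu₀ne hu₀nadj'
      obtain ⟨z, hz⟩ := exists_adj_of_connected hconn vstar u₀ (Ne.symm hu₀ne)
      have hzvstar : z ≠ vstar := (G.ne_of_adj hz).symm
      have hzu₀ : z ≠ u₀ := fun h => hu₀nadj (h ▸ hz)
      have hadj_u₀z : G.Adj u₀ z := hfull z hzu₀ hzvstar
      refine rot_improves hb hα0 hα1 hmax hx heig hdegle hadj_u₀z hu₀nadj' hu₀ne hzvstar
        ?_ (hvstar z) hAlt
      apply connected_of_hub vstar
      intro p hp
      by_cases hpu : p = u₀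
      · left; rw [hpu]; exact ⟨hu₀ne, Or.inr (Or.inl ⟨rfl, rfl⟩)⟩
      · by_cases hpz : p = z
        · left
          rw [hpz]
          apply le_addE
          apply delE_adj_of G hz.symm
          · rintro ⟨h1, _⟩; exact hzu₀ h1
          · rintro ⟨_, h2⟩; exact (Ne.symm hu₀ne) h2
        · right
          refine ⟨u₀, ?_, ⟨hu₀ne, Or.inr (Or.inl ⟨rfl, rfl⟩)⟩⟩
          apply le_addE
          apply delE_adj_of G ((hfull p hpu hp).symm)
          · rintro ⟨h1, _⟩; exact hpu h1
          · rintro ⟨h1, _⟩; exact hpz h1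
  -- the unique non-neighbour w₀ of vstar
  have hWcard : (Finset.univ \ insert vstar
      (Finset.univ.filter (fun w => G.Adj vstar w))).card = 1 := by
    rw [Finset.card_sdiff_of_subset (Finset.subset_univ _), Finset.card_insert_of_notMem]
    · rw [← degN, hdegv]
      simp only [Finset.card_univ, Fintype.card_fin]
      omega
    · rw [Finset.mem_filter]
      rintro ⟨_, h⟩
      exact G.loopless.irrefl vstar h
  obtain ⟨w₀, hw₀⟩ := Finset.card_eq_one.mp hWcard
  have hw₀mem : w₀ ∈ Finset.univ \ insert vstar
      (Finset.univ.filter (fun w => G.Adj vstar w)) := by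
    rw [hw₀]; exact Finset.mem_singleton_self w₀
  rw [Finset.mem_sdiff, Finset.mem_insert] at hw₀mem
  push_neg at hw₀mem
  have hw₀ne : w₀ ≠ vstar := hw₀mem.2.1
  have hw₀nadj : ¬ G.Adj vstar w₀ := by
    intro h
    exact hw₀mem.2.2 (by rw [Finset.mem_filter]; exact ⟨Finset.mem_univ w₀, h⟩)
  have hw₀uniq : ∀ p, p ≠ vstar → ¬ G.Adj vstar p → p = w₀ := by
    intro p h1 h2
    have hpmem : p ∈ Finset.univ \ insert vstar
        (Finset.univ.filter (fun w => G.Adj vstar w)) := by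
      rw [Finset.mem_sdiff, Finset.mem_insert]
      refine ⟨Finset.mem_univ p, ?_⟩
      push_neg
      exact ⟨h1, by rw [Finset.mem_filter]; rintro ⟨_, h⟩; exact h2 h⟩
    rw [hw₀, Finset.mem_singleton] at hpmem
    exact hpmem
  intro v hv hU2
  rw [SimpleGraph.mem_neighborSet] at hv
  have hvne : v ≠ vstar := (G.ne_of_adj hv).symm
  have hvw₀ne : v ≠ w₀ := fun h => hw₀nadj (h ▸ hv)
  -- identification of degIn with a filter card
  have hdegIn_eq : degIn G (G.neighborSet vstar) v
      = (Finset.univ.filter (fun u => G.Adj v u ∧ G.Adj vstar u)).card := by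
    rw [degIn]
    rw [show G.neighborSet v ∩ G.neighborSet vstar
        = ↑(Finset.univ.filter (fun u => G.Adj v u ∧ G.Adj vstar u)) by
      ext u
      simp [SimpleGraph.mem_neighborSet]]
    exact Set.ncard_coe_finset _
  set UU := (Finset.univ.filter (fun u => G.Adj v u ∧ G.Adj vstar u)).card with hUU
  have hUUle : UU ≤ b - 2 := by
    have hsub : Finset.univ.filter (fun u => G.Adj v u ∧ G.Adj vstar u)
        ⊆ (Finset.univ.filter (fun w => G.Adj vstar w)).erase v := by
      intro u hu
      rw [Finset.mem_filter] at hu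
      rw [Finset.mem_erase, Finset.mem_filter]
      exact ⟨(G.ne_of_adj hu.2.1).symm, Finset.mem_univ u, hu.2.2⟩
    have hle := Finset.card_le_card hsub
    rw [Finset.card_erase_of_mem (by rw [Finset.mem_filter]; exact ⟨Finset.mem_univ v, hv⟩)]
      at hle
    rw [← degN, hdegv] at hle
    omega
  have hUUne : UU ≠ b - 2 := by rw [hdegIn_eq] at hU2; exact hU2
  have hUUle3 : UU ≤ b - 3 := by omega
  -- Step B1 : v is adjacent to w₀
  have hvw₀ : G.Adj v w₀ := by
    by_contra hnvw
    have hdegvv : degN G v ≤ b - 2 := by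
      have hsub : Finset.univ.filter (fun u => G.Adj v u)
          ⊆ insert vstar (Finset.univ.filter (fun u => G.Adj v u ∧ G.Adj vstar u)) := by
        intro u hu
        rw [Finset.mem_filter] at hu
        rw [Finset.mem_insert]
        by_cases h1 : u = vstar
        · exact Or.inl h1
        · right
          rw [Finset.mem_filter]
          refine ⟨Finset.mem_univ u, hu.2, ?_⟩
          by_contra h2
          exact hnvw ((hw₀uniq u h1 h2) ▸ hu.2)
      have := Finset.card_le_card hsub
      have h3 := Finset.card_insert_le vstar
        (Finset.univ.filter (fun u => G.Adj v u ∧ G.Adj vstar u))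
      rw [← degN] at this
      omega
    have hdegw₀ : degN G w₀ ≤ b - 2 := by
      have hsub : Finset.univ.filter (fun u => G.Adj w₀ u)
          ⊆ ((Finset.univ.erase w₀).erase vstar).erase v := by
        intro z hz
        rw [Finset.mem_filter] at hz
        rw [Finset.mem_erase, Finset.mem_erase, Finset.mem_erase]
        refine ⟨?_, ?_, (G.ne_of_adj hz.2).symm, Finset.mem_univ z⟩
        · rintro rfl; exact hnvw hz.2.symm
        · rintro rfl; exact hw₀nadj hz.2.symm
      have hle := Finset.card_le_card hsub
      rw [Finset.card_erase_of_mem, Finset.card_erase_of_mem, Finset.card_erase_of_mem]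
        at hle
      · simp only [Finset.card_univ, Fintype.card_fin] at hle
        rw [← degN] at hle
        omega
      · exact Finset.mem_univ w₀
      · rw [Finset.mem_erase]; exact ⟨Ne.symm hw₀ne, Finset.mem_univ vstar⟩
      · rw [Finset.mem_erase, Finset.mem_erase]
        exact ⟨hvne, hvw₀ne, Finset.mem_univ v⟩
    exact add_improves hb hα0 hα1 hmax hconn hx heig hdegle hvw₀ne hnvw hdegvv hdegw₀
  refine ⟨?_, ?_⟩
  · -- degIn in W is 1
    rw [degIn]
    have hWset : (G.neighborSet vstar ∪ {vstar})ᶜ = ({w₀} : Set (Fin (b + 1))) := by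
      ext p
      simp only [Set.mem_compl_iff, Set.mem_union, Set.mem_singleton_iff,
        SimpleGraph.mem_neighborSet]
      constructor
      · intro h
        push_neg at h
        exact hw₀uniq p h.2 h.1
      · rintro rfl
        push_neg
        exact ⟨hw₀nadj, hw₀ne⟩
    rw [hWset]
    rw [show G.neighborSet v ∩ ({w₀} : Set (Fin (b + 1))) = {w₀} by
      rw [Set.inter_eq_right]
      intro p hp
      rw [Set.mem_singleton_iff] at hp
      rw [SimpleGraph.mem_neighborSet, hp]
      exact hvw₀]
    exact Set.ncard_singleton w₀
  · -- degIn in U is b - 3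
    rw [hdegIn_eq]
    by_contra hUUne3
    have hUU4 : UU ≤ b - 4 ∧ 4 ≤ b := by omega
    have hdegvv : degN G v ≤ b - 2 := by
      have hsub : Finset.univ.filter (fun u => G.Adj v u)
          ⊆ insert vstar (insert w₀
            (Finset.univ.filter (fun u => G.Adj v u ∧ G.Adj vstar u))) := by
        intro u hu
        rw [Finset.mem_filter] at hu
        rw [Finset.mem_insert, Finset.mem_insert]
        by_cases h1 : u = vstar
        · exact Or.inl h1
        · by_cases h2 : u = w₀
          · exact Or.inr (Or.inl h2)
          · right; right
            rw [Finset.mem_filter]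
            refine ⟨Finset.mem_univ u, hu.2, ?_⟩
            by_contra h3
            exact h2 (hw₀uniq u h1 h3)
      have hle := Finset.card_le_card hsub
      have h3 := Finset.card_insert_le w₀
        (Finset.univ.filter (fun u => G.Adj v u ∧ G.Adj vstar u))
      have h4 := Finset.card_insert_le vstar (insert w₀
        (Finset.univ.filter (fun u => G.Adj v u ∧ G.Adj vstar u)))
      rw [← degN] at hle
      omega
    -- a neighbour u of vstar that is not adjacent to v
    have hexu : ∃ u, G.Adj vstar u ∧ ¬ G.Adj v u ∧ u ≠ v := by
      by_contra hc
      push_neg at hc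
      have hsub : (Finset.univ.filter (fun w => G.Adj vstar w)).erase v
          ⊆ Finset.univ.filter (fun u => G.Adj v u ∧ G.Adj vstar u) := by
        intro u hu
        rw [Finset.mem_erase, Finset.mem_filter] at hu
        rw [Finset.mem_filter]
        refine ⟨Finset.mem_univ u, ?_, hu.2.2⟩
        by_contra h2
        exact hu.1 (hc u hu.2.2 h2)
      have hle := Finset.card_le_card hsub
      rw [Finset.card_erase_of_mem (by rw [Finset.mem_filter]; exact ⟨Finset.mem_univ v, hv⟩),
        ← degN, hdegv] at hle
      omega
    obtain ⟨u, huvstar, hunadj, huv⟩ := hexu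
    by_cases hdu : degN G u ≤ b - 2
    · exact add_improves hb hα0 hα1 hmax hconn hx heig hdegle (Ne.symm huv)
        hunadj hdegvv hdu
    · have hdu' : degN G u = b - 1 := by have := hdegle u; omega
      have hunadj' : ¬ G.Adj u v := fun h => hunadj h.symm
      have hfullu : ∀ z, z ≠ u → z ≠ v → G.Adj u z :=
        full_vertex hb1 hdu' huv hunadj'
      have hfullv : ∀ z, z ≠ vstar → z ≠ w₀ → G.Adj vstar z :=
        full_vertex hb1 hdegv (Ne.symm hw₀ne) hw₀nadj
      have huw₀ : u ≠ w₀ := fun h => hw₀nadj (h ▸ huvstar)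
      have hadj_uw₀ : G.Adj u w₀ := hfullu w₀ (Ne.symm huw₀) (Ne.symm hvw₀ne)
      -- x w₀ ≤ x v
      have hxvw : x w₀ ≤ x v := by
        set lam := lambdaAlpha G α with hlamdef
        set S := ∑ z, x z with hS
        set β : ℝ := ((b - 1 : ℕ) : ℝ) with hβ
        have hsu : sS G x u = S - x u - x v := sS_full huv hunadj' hfullu x
        have hsv : sS G x vstar = S - x vstar - x w₀ :=
          sS_full (Ne.symm hw₀ne) hw₀nadj hfullv x
        have hdRu : dR G u = β := by rw [dR_eq, hdu']
        have hdRv : dR G vstar = β := by rw [dR_eq, hdegv]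
        have equ := hev u
        have heqv := hev vstar
        rw [hdRu, hsu] at equ
        rw [hdRv, hsv] at heqv
        have hspos : 0 < sS G x vstar := sS_pos G x hx vstar v hv
        rw [hsv] at hspos
        have hcoef : 0 < lam - α * β := by
          by_contra hcon
          push_neg at hcon
          have h1 : (lam - α * β) * x vstar ≤ 0 :=
            mul_nonpos_of_nonpos_of_nonneg (by linarith) (hx vstar).le
          nlinarith
        have hkey : (lam - α * β + (1 - α)) * (x vstar - x u)
            = (1 - α) * (x v - x w₀) := by linear_combination equ - heqv
        by_contra hcon
        push_neg at hcon
        have h1 : (1 - α) * (x v - x w₀) < 0 :=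
          mul_neg_of_pos_of_neg (by linarith) (by linarith)
        nlinarith [mul_nonneg (by linarith : (0:ℝ) ≤ lam - α * β + (1 - α))
          (sub_nonneg.2 (hvstar u))]
      -- rotate u w₀ to u v
      refine rot_improves hb hα0 hα1 hmax hx heig hdegle hadj_uw₀ hunadj' huv
        (Ne.symm hvw₀ne) ?_ hxvw hdegvv
      apply connected_of_hub vstar
      intro p hp
      by_cases hpu : p = u
      · left
        rw [hpu]
        apply le_addE
        apply delE_adj_of G (hfullu vstar (G.ne_of_adj huvstar) (Ne.symm hvne))
        · rintro ⟨_, h2⟩; exact hw₀ne h2.symm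
        · rintro ⟨h1, _⟩; exact huw₀ h1
      · by_cases hpw : p = w₀
        · right
          refine ⟨v, ?_, ?_⟩
          · rw [hpw]
            apply le_addE
            apply delE_adj_of G hvw₀.symm
            · rintro ⟨h1, _⟩; exact huw₀ h1.symm
            · rintro ⟨_, h2⟩; exact huv h2.symm
          · apply le_addE
            apply delE_adj_of G hv.symm
            · rintro ⟨h1, _⟩; exact huv h1.symm
            · rintro ⟨h1, _⟩; exact hvw₀ne h1
        · by_cases hpv : p = v
          · left
            rw [hpv]
            apply le_addE
            apply delE_adj_of G hv.symm
            · rintro ⟨h1, _⟩; exact huv h1.symm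
            · rintro ⟨h1, _⟩; exact hvw₀ne h1
          · left
            apply le_addE
            apply delE_adj_of G (hfullv p hp hpw).symm
            · rintro ⟨h1, _⟩; exact hpu h1
            · rintro ⟨h1, _⟩; exact hpw h1
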